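/- Let n ≥ 2, let s : (Fin n → ℚ) → ℚ be the linear map summing the coordinates, and let μ : Λ(Fin n → ℚ) → Λ(ℚ) be the induced ℚ-algebra homomorphism between exterior algebras (the functorial map on exterior algebras induced by s). Then (ker μ)^{n−1} ≠ 0 and (ker μ)^n = 0; that is, nil(ker μ) = n − 1. -/

import Mathlib

set_option synthInstance.maxHeartbeats 400000

set_option maxHeartbeats 1600000

section NilKerAux
open ExteriorAlgebra

variable {M : Type*} [AddCommGroup M] [Module ℚ M]

/-- Any element times an `ι` lands in `range ι * ⊤`. -/
private lemma aux_mul_ι_mem (x : ExteriorAlgebra ℚ M) :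
    ∀ v : M, x * ι ℚ v ∈
      (LinearMap.range (ι ℚ : M →ₗ[ℚ] ExteriorAlgebra ℚ M) : Submodule ℚ _) * ⊤ := by
  induction x using ExteriorAlgebra.induction with
  | algebraMap r =>
      intro v
      rw [Algebra.commutes]
      exact Submodule.mul_mem_mul (LinearMap.mem_range_self _ v) trivial
  | ι u =>
      intro v
      have h := ExteriorAlgebra.ι_add_mul_swap (R := ℚ) u v
      rw [eq_neg_of_add_eq_zero_left h]
      exact neg_mem (Submodule.mul_mem_mul (LinearMap.mem_range_self _ v) trivial)
  | add a b ha hb =>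
      intro v; rw [add_mul]; exact add_mem (ha v) (hb v)
  | mul a b ha hb =>
      intro v
      rw [mul_assoc]
      refine Submodule.mul_induction_on (hb v) ?_ ?_
      · intro m hm t _
        obtain ⟨w, rfl⟩ := hm
        rw [← mul_assoc]
        have h2 : ((LinearMap.range (ι ℚ : M →ₗ[ℚ] ExteriorAlgebra ℚ M) : Submodule ℚ _) * ⊤)
            * ⊤ ≤ (LinearMap.range (ι ℚ) : Submodule ℚ _) * ⊤ := by
          rw [mul_assoc]
          exact mul_le_mul_right le_top _
        exact h2 (Submodule.mul_mem_mul (ha w) trivial)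
      · intro p q hp hq
        rw [mul_add]; exact add_mem hp hq

private lemma aux_top_mul_le :
    (⊤ : Submodule ℚ (ExteriorAlgebra ℚ M)) * LinearMap.range (ι ℚ : M →ₗ[ℚ] _) ≤
      (LinearMap.range (ι ℚ : M →ₗ[ℚ] ExteriorAlgebra ℚ M) : Submodule ℚ _) * ⊤ := by
  refine Submodule.mul_le.2 fun x _ y hy => ?_
  obtain ⟨v, rfl⟩ := hy
  exact aux_mul_ι_mem x v

private lemma aux_top_mul_pow_le (m : ℕ) :
    (⊤ : Submodule ℚ (ExteriorAlgebra ℚ M)) * LinearMap.range (ι ℚ : M →ₗ[ℚ] _) ^ m ≤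
      (LinearMap.range (ι ℚ : M →ₗ[ℚ] ExteriorAlgebra ℚ M) : Submodule ℚ _) ^ m * ⊤ := by
  induction m with
  | zero => simp
  | succ m ih =>
      rw [pow_succ]
      calc (⊤ : Submodule ℚ (ExteriorAlgebra ℚ M)) *
            (LinearMap.range (ι ℚ : M →ₗ[ℚ] _) ^ m * LinearMap.range (ι ℚ))
          = (⊤ * LinearMap.range (ι ℚ : M →ₗ[ℚ] _) ^ m) * LinearMap.range (ι ℚ) := by
            rw [mul_assoc]
        _ ≤ (LinearMap.range (ι ℚ : M →ₗ[ℚ] _) ^ m * ⊤) * LinearMap.range (ι ℚ) :=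
            mul_le_mul_left ih _
        _ = LinearMap.range (ι ℚ : M →ₗ[ℚ] _) ^ m * (⊤ * LinearMap.range (ι ℚ)) := by
            rw [mul_assoc]
        _ ≤ LinearMap.range (ι ℚ : M →ₗ[ℚ] _) ^ m * (LinearMap.range (ι ℚ) * ⊤) :=
            mul_le_mul_right aux_top_mul_le _
        _ = (LinearMap.range (ι ℚ : M →ₗ[ℚ] _) ^ m * LinearMap.range (ι ℚ)) * ⊤ := by
            rw [mul_assoc]

private lemma aux_map_pow_le_span (W : Submodule ℚ M) (m : ℕ) :
    (W.map (ι ℚ : M →ₗ[ℚ] ExteriorAlgebra ℚ M)) ^ m ≤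
      Submodule.span ℚ (Set.range fun w : Fin m → W =>
        ιMulti ℚ m (fun i => (w i : M))) := by
  induction m with
  | zero =>
      rw [pow_zero, Submodule.one_eq_span]
      refine Submodule.span_le.2 ?_
      rintro x rfl
      exact Submodule.subset_span ⟨finZeroElim, by simp [ιMulti_zero_apply]⟩
  | succ m ih =>
      rw [pow_succ']
      refine Submodule.mul_le.2 fun a ha b hb => ?_
      obtain ⟨w0, hw0, rfl⟩ := ha
      refine Submodule.span_induction ?_ ?_ ?_ ?_ (ih hb)
      · rintro x ⟨w, rfl⟩
        apply Submodule.subset_span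
        refine ⟨Fin.cons ⟨w0, hw0⟩ w, ?_⟩
        refine (ιMulti_succ_apply _).trans ?_
        congr 1
      · simp
      · intro x y _ _ hx hy
        rw [mul_add]; exact add_mem hx hy
      · intro r x _ hx
        rw [mul_smul_comm]; exact Submodule.smul_mem _ r hx

private lemma aux_map_pow_eq_bot [FiniteDimensional ℚ M] (W : Submodule ℚ M) (m : ℕ)
    (hm : Module.finrank ℚ W < m) :
    (W.map (ι ℚ : M →ₗ[ℚ] ExteriorAlgebra ℚ M)) ^ m = ⊥ := by
  refine le_bot_iff.1 ((aux_map_pow_le_span W m).trans ?_)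
  refine Submodule.span_le.2 ?_
  rintro x ⟨w, rfl⟩
  have : ¬ LinearIndependent ℚ (fun i => (w i : M)) := by
    intro h
    have h2 : LinearIndependent ℚ w := h.of_comp W.subtype
    have := h2.fintype_card_le_finrank
    simp only [Fintype.card_fin] at this
    omega
  simp [AlternatingMap.map_linearDependent _ _ this]

private lemma aux_A_mul_F_le :
    (LinearMap.range (ι ℚ : M →ₗ[ℚ] ExteriorAlgebra ℚ M) : Submodule ℚ _) *
      ((LinearMap.range (ι ℚ) : Submodule ℚ _) * ((LinearMap.range (ι ℚ) : Submodule ℚ _) * ⊤)) ≤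
    (LinearMap.range (ι ℚ : M →ₗ[ℚ] ExteriorAlgebra ℚ M) : Submodule ℚ _) *
      ((LinearMap.range (ι ℚ) : Submodule ℚ _) * ⊤) :=
  mul_le_mul_right (mul_le_mul_right le_top _) _

private lemma aux_F_mul_top_le :
    ((LinearMap.range (ι ℚ : M →ₗ[ℚ] ExteriorAlgebra ℚ M) : Submodule ℚ _) *
      ((LinearMap.range (ι ℚ) : Submodule ℚ _) * ⊤)) * ⊤ ≤
    (LinearMap.range (ι ℚ : M →ₗ[ℚ] ExteriorAlgebra ℚ M) : Submodule ℚ _) *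
      ((LinearMap.range (ι ℚ) : Submodule ℚ _) * ⊤) := by
  rw [mul_assoc, mul_assoc]
  exact mul_le_mul_right (mul_le_mul_right le_top _) _

private lemma aux_decompose (x : ExteriorAlgebra ℚ M) :
    ∃ (r : ℚ) (v : M) (f : ExteriorAlgebra ℚ M),
      f ∈ (LinearMap.range (ι ℚ : M →ₗ[ℚ] ExteriorAlgebra ℚ M) : Submodule ℚ _) *
        ((LinearMap.range (ι ℚ) : Submodule ℚ _) * ⊤) ∧
      x = algebraMap ℚ _ r + ι ℚ v + f := by
  induction x using ExteriorAlgebra.induction with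
  | algebraMap r => exact ⟨r, 0, 0, Submodule.zero_mem _, by simp⟩
  | ι v => exact ⟨0, v, 0, Submodule.zero_mem _, by simp⟩
  | add a b ha hb =>
      obtain ⟨r, v, f, hf, rfl⟩ := ha
      obtain ⟨r', v', f', hf', rfl⟩ := hb
      refine ⟨r + r', v + v', f + f', add_mem hf hf', ?_⟩
      rw [map_add, map_add]; abel
  | mul a b ha hb =>
      obtain ⟨r, v, f, hf, rfl⟩ := ha
      obtain ⟨r', v', f', hf', rfl⟩ := hb
      have hA : ∀ u : M, ι ℚ u ∈ LinearMap.range (ι ℚ : M →ₗ[ℚ] ExteriorAlgebra ℚ M) :=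
        fun u => LinearMap.mem_range_self _ u
      refine ⟨r * r', r • v' + r' • v,
        ι ℚ v * ι ℚ v' + (r • f' + r' • f) +
          (ι ℚ v * f' + f * ι ℚ v' + f * f'), ?_, ?_⟩
      · have hmem1 : ι ℚ v * ι ℚ v' ∈
            (LinearMap.range (ι ℚ : M →ₗ[ℚ] ExteriorAlgebra ℚ M) : Submodule ℚ _) *
              ((LinearMap.range (ι ℚ) : Submodule ℚ _) * ⊤) := by
          have := Submodule.mul_mem_mul (hA v)
            (Submodule.mul_mem_mul (hA v') (Submodule.mem_top (x := (1 : ExteriorAlgebra ℚ M))))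
          rwa [mul_one] at this
        have hmem2 := aux_A_mul_F_le (Submodule.mul_mem_mul (hA v) hf')
        have hmem3 := aux_F_mul_top_le
          (Submodule.mul_mem_mul hf (Submodule.mem_top (x := ι ℚ v')))
        have hmem4 := aux_F_mul_top_le (Submodule.mul_mem_mul hf (Submodule.mem_top (x := f')))
        exact add_mem (add_mem hmem1 (add_mem (Submodule.smul_mem _ _ hf')
          (Submodule.smul_mem _ _ hf))) (add_mem (add_mem hmem2 hmem3) hmem4)
      · simp only [map_add, map_smul, map_mul, Algebra.smul_def]
        rw [Algebra.commutes r' (ι ℚ v), Algebra.commutes r' f]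
        noncomm_ring

/-- `toTrivSqZeroExt` kills products of two `ι`'s. -/
private lemma aux_trivsq_kills {y : ExteriorAlgebra ℚ ℚ}
    (hy : y ∈ (LinearMap.range (ι ℚ : ℚ →ₗ[ℚ] ExteriorAlgebra ℚ ℚ) : Submodule ℚ _) *
      ((LinearMap.range (ι ℚ) : Submodule ℚ _) * ⊤)) :
    toTrivSqZeroExt y = 0 := by
  refine Submodule.mul_induction_on hy ?_ ?_
  · rintro m ⟨a, rfl⟩ t ht
    refine Submodule.mul_induction_on ht ?_ ?_
    · rintro m' ⟨b, rfl⟩ c _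
      rw [← mul_assoc, map_mul, map_mul, toTrivSqZeroExt_ι, toTrivSqZeroExt_ι,
        TrivSqZeroExt.inr_mul_inr, zero_mul]
    · intro p q hp hq
      rw [mul_add, map_add, hp, hq, add_zero]
  · intro p q hp hq
    rw [map_add, hp, hq, add_zero]

private lemma aux_map_F {N : Type*} [AddCommGroup N] [Module ℚ N]
    (s : M →ₗ[ℚ] N) {f : ExteriorAlgebra ℚ M}
    (hf : f ∈ (LinearMap.range (ι ℚ : M →ₗ[ℚ] _) : Submodule ℚ _) *
      ((LinearMap.range (ι ℚ) : Submodule ℚ _) * ⊤)) :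
    ExteriorAlgebra.map s f ∈ (LinearMap.range (ι ℚ : N →ₗ[ℚ] _) : Submodule ℚ _) *
      ((LinearMap.range (ι ℚ) : Submodule ℚ _) * ⊤) := by
  have h0 : Submodule.map (ExteriorAlgebra.map s).toLinearMap
      (LinearMap.range (ι ℚ : M →ₗ[ℚ] _)) ≤ LinearMap.range (ι ℚ : N →ₗ[ℚ] _) := by
    rintro y ⟨z, ⟨v, rfl⟩, rfl⟩
    exact ⟨s v, (map_apply_ι s v).symm⟩
  have hmem : ExteriorAlgebra.map s f ∈ Submodule.map (ExteriorAlgebra.map s).toLinearMap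
      ((LinearMap.range (ι ℚ : M →ₗ[ℚ] _) : Submodule ℚ _) *
        ((LinearMap.range (ι ℚ) : Submodule ℚ _) * ⊤)) := ⟨f, hf, rfl⟩
  rw [Submodule.map_mul, Submodule.map_mul] at hmem
  exact mul_le_mul' h0 (mul_le_mul' h0 le_top) hmem

private lemma aux_le_mul_top {B : Type*} [Ring B] [Algebra ℚ B] (N : Submodule ℚ B) :
    N ≤ N * ⊤ :=
  fun x hx => mul_one x ▸ Submodule.mul_mem_mul hx trivial

private lemma aux_pow_mono {B : Type*} [Ring B] [Algebra ℚ B] {N P : Submodule ℚ B}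
    (h : P ≤ N) (m : ℕ) : P ^ m ≤ N ^ m := by
  induction m with
  | zero => simp
  | succ m ih =>
      rw [pow_succ, pow_succ]
      exact (mul_le_mul_left ih _).trans (mul_le_mul_right h _)

private lemma aux_D_mul (i j : ℕ) :
    ((LinearMap.range (ι ℚ : M →ₗ[ℚ] ExteriorAlgebra ℚ M) : Submodule ℚ _) ^ i * ⊤) *
      ((LinearMap.range (ι ℚ) : Submodule ℚ _) ^ j * ⊤) ≤
    (LinearMap.range (ι ℚ : M →ₗ[ℚ] ExteriorAlgebra ℚ M) : Submodule ℚ _) ^ (i + j) * ⊤ := by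
  have h1 : (⊤ : Submodule ℚ (ExteriorAlgebra ℚ M)) *
      ((LinearMap.range (ι ℚ) : Submodule ℚ _) ^ j * ⊤) ≤
      (LinearMap.range (ι ℚ) : Submodule ℚ _) ^ j * ⊤ := by
    rw [← mul_assoc]
    exact (mul_le_mul_left (aux_top_mul_pow_le j) _).trans
      (by rw [mul_assoc]; exact mul_le_mul_right le_top _)
  calc ((LinearMap.range (ι ℚ : M →ₗ[ℚ] ExteriorAlgebra ℚ M) : Submodule ℚ _) ^ i * ⊤) *
        ((LinearMap.range (ι ℚ) : Submodule ℚ _) ^ j * ⊤)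
      = (LinearMap.range (ι ℚ) : Submodule ℚ _) ^ i *
        (⊤ * ((LinearMap.range (ι ℚ) : Submodule ℚ _) ^ j * ⊤)) := by rw [mul_assoc]
    _ ≤ (LinearMap.range (ι ℚ) : Submodule ℚ _) ^ i *
        ((LinearMap.range (ι ℚ) : Submodule ℚ _) ^ j * ⊤) := mul_le_mul_right h1 _
    _ = (LinearMap.range (ι ℚ) : Submodule ℚ _) ^ (i + j) * ⊤ := by
        rw [← mul_assoc, ← pow_add]

private lemma aux_D_anti {i j : ℕ} (h : i ≤ j) :
    ((LinearMap.range (ι ℚ : M →ₗ[ℚ] ExteriorAlgebra ℚ M) : Submodule ℚ _) ^ j * ⊤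
      : Submodule ℚ (ExteriorAlgebra ℚ M)) ≤
    (LinearMap.range (ι ℚ) : Submodule ℚ _) ^ i * ⊤ := by
  obtain ⟨l, rfl⟩ := Nat.exists_eq_add_of_le h
  rw [pow_add, mul_assoc]
  exact mul_le_mul_right le_top _

private lemma aux_pow_le (P : Submodule ℚ (ExteriorAlgebra ℚ M))
    (hP : P ≤ LinearMap.range (ι ℚ : M →ₗ[ℚ] _)) (m : ℕ) :
    (P ⊔ (LinearMap.range (ι ℚ : M →ₗ[ℚ] ExteriorAlgebra ℚ M) : Submodule ℚ _) ^ 2 * ⊤) ^ m ≤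
      P ^ m ⊔ ((LinearMap.range (ι ℚ) : Submodule ℚ _) ^ (m + 1) * ⊤) := by
  induction m with
  | zero => simp
  | succ m ih =>
      have hPD : P ≤ (LinearMap.range (ι ℚ : M →ₗ[ℚ] _) : Submodule ℚ _) ^ 1 * ⊤ := by
        refine hP.trans ?_
        rw [pow_one]
        exact aux_le_mul_top _
      have hPmD : P ^ m ≤ (LinearMap.range (ι ℚ : M →ₗ[ℚ] _) : Submodule ℚ _) ^ m * ⊤ :=
        (aux_pow_mono hP m).trans (aux_le_mul_top _)
      rw [pow_succ']
      calc (P ⊔ (LinearMap.range (ι ℚ : M →ₗ[ℚ] _) : Submodule ℚ _) ^ 2 * ⊤) *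
            (P ⊔ (LinearMap.range (ι ℚ) : Submodule ℚ _) ^ 2 * ⊤) ^ m
          ≤ (P ⊔ (LinearMap.range (ι ℚ) : Submodule ℚ _) ^ 2 * ⊤) *
            (P ^ m ⊔ (LinearMap.range (ι ℚ) : Submodule ℚ _) ^ (m + 1) * ⊤) :=
            mul_le_mul_right ih _
        _ = P * P ^ m ⊔ P * ((LinearMap.range (ι ℚ) : Submodule ℚ _) ^ (m + 1) * ⊤) ⊔
            (((LinearMap.range (ι ℚ) : Submodule ℚ _) ^ 2 * ⊤) * P ^ m ⊔
             ((LinearMap.range (ι ℚ) : Submodule ℚ _) ^ 2 * ⊤) *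
               ((LinearMap.range (ι ℚ) : Submodule ℚ _) ^ (m + 1) * ⊤)) := by
            rw [Submodule.sup_mul, Submodule.mul_sup, Submodule.mul_sup]
        _ ≤ P ^ (m + 1) ⊔ ((LinearMap.range (ι ℚ) : Submodule ℚ _) ^ (m + 2) * ⊤) := by
            refine sup_le (sup_le ?_ ?_) (sup_le ?_ ?_)
            · rw [← pow_succ']; exact le_sup_left
            · refine le_sup_of_le_right ?_
              refine ((mul_le_mul_left hPD _).trans ?_)
              exact ((mul_le_mul_left (le_refl _) _).trans
                ((aux_D_mul 1 (m + 1)).trans (aux_D_anti (by omega))))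
            · refine le_sup_of_le_right ?_
              refine ((mul_le_mul_right hPmD _).trans ?_)
              exact (aux_D_mul 2 m).trans (aux_D_anti (by omega))
            · refine le_sup_of_le_right ?_
              exact (aux_D_mul 2 (m + 1)).trans (aux_D_anti (by omega))

private lemma aux_prod_mem {B : Type*} [Ring B] [Algebra ℚ B] (N : Submodule ℚ B) {m : ℕ}
    (g : Fin m → B) (hg : ∀ i, g i ∈ N) : (List.ofFn g).prod ∈ N ^ m := by
  induction m with
  | zero =>
      rw [List.ofFn_zero, List.prod_nil, pow_zero, Submodule.one_eq_span]
      exact Submodule.subset_span (Set.mem_singleton 1)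
  | succ m ih =>
      rw [List.ofFn_succ, List.prod_cons, pow_succ']
      exact Submodule.mul_mem_mul (hg 0) (ih _ fun i => hg _)

/-- The `(k+1)`-ary alternating form used to detect the nonvanishing wedge. -/
private noncomputable def auxGdet (k : ℕ) : (Fin (k + 2) → ℚ) [⋀^Fin (k+1)]→ₗ[ℚ] ℚ :=
  (Matrix.detRowAlternating (n := Fin (k + 2)) (R := ℚ)).curryLeft (Pi.single 0 1)

private lemma auxGdet_apply (k : ℕ) (d : Fin (k+1) → (Fin (k+2) → ℚ))
    (hd : d = fun i => Pi.single i.succ 1 - Pi.single 0 1) :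
    auxGdet k d = 1 := by
  rw [auxGdet, AlternatingMap.curryLeft_apply_apply]
  show @Matrix.det (Fin (k+1).succ) _ _ ℚ _ (Matrix.vecCons (Pi.single (0 : Fin (k+2)) (1:ℚ)) d) = 1
  refine (Matrix.det_succ_row_zero (n := k+1) _).trans ?_
  rw [Finset.sum_eq_single 0]
  · have h1 : Matrix.vecCons (Pi.single (0 : Fin (k+2)) (1:ℚ)) d 0 0 = 1 := by simp
    rw [h1]
    have h2 : Matrix.submatrix (Matrix.vecCons (Pi.single (0 : Fin (k+2)) (1:ℚ)) d)
        Fin.succ (Fin.succAbove 0) = (1 : Matrix (Fin (k+1)) (Fin (k+1)) ℚ) := by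
      ext i j
      change Matrix.vecCons (Pi.single (0 : Fin (k+2)) (1:ℚ)) d i.succ (Fin.succAbove 0 j) =
        (1 : Matrix (Fin (k+1)) (Fin (k+1)) ℚ) i j
      simp only [Matrix.submatrix_apply, Fin.succAbove_zero,
        Matrix.cons_val_succ, hd]
      simp only [Pi.sub_apply, Pi.single_apply, Matrix.one_apply]
      simp [Fin.succ_ne_zero, Fin.succ_inj, eq_comm]
    rw [h2, Matrix.det_one]
    norm_num
  · intro j _ hj
    have : Matrix.vecCons (Pi.single (0 : Fin (k+2)) (1:ℚ)) d 0 j = 0 := by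
      simp [Pi.single_apply, hj]
    rw [this]
    ring
  · simp

end NilKerAux

open ExteriorAlgebra in
/-- Let `s : (Fin n → ℚ) → ℚ` be the linear map summing the coordinates and
`μ = ExteriorAlgebra.map s : Λ(Fin n → ℚ) → Λ(ℚ)` the induced algebra map between
exterior algebras. With `K` the kernel of `μ` (a two-sided ideal, viewed here as a
`ℚ`-submodule of the exterior algebra, so that its powers make sense), one has
`K^{n−1} ≠ 0` and `K^n = 0`, i.e. `nil(ker μ) = n − 1`. -/
theorem nil_ker_mul_odd_sphere (n : ℕ) (hn : 2 ≤ n)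
    (s : (Fin n → ℚ) →ₗ[ℚ] ℚ) (hs : ∀ v, s v = ∑ i, v i)
    (μ : ExteriorAlgebra ℚ (Fin n → ℚ) →ₐ[ℚ] ExteriorAlgebra ℚ ℚ)
    (hμ : μ = ExteriorAlgebra.map s)
    (K : Submodule ℚ (ExteriorAlgebra ℚ (Fin n → ℚ)))
    (hK : ∀ x : ExteriorAlgebra ℚ (Fin n → ℚ), x ∈ K ↔ μ x = 0) :
    K ^ (n - 1) ≠ ⊥ ∧ K ^ n = ⊥ := by
  subst hμ
  obtain ⟨k, rfl⟩ := Nat.exists_eq_add_of_le' hn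
  constructor
  · -- K ^ (k + 1) ≠ ⊥
    show K ^ (k + 1) ≠ ⊥
    set d : Fin (k+1) → (Fin (k+2) → ℚ) :=
      fun i => Pi.single i.succ 1 - Pi.single 0 1 with hd
    set x : ExteriorAlgebra ℚ (Fin (k+2) → ℚ) := ιMulti ℚ (k+1) d with hx
    have hdK : ∀ i : Fin (k+1), ι ℚ (d i) ∈ K := by
      intro i
      rw [hK, map_apply_ι]
      have : s (d i) = 0 := by
        rw [hd, hs]
        simp [Pi.single_apply, Finset.sum_sub_distrib]
      rw [this, map_zero]
    have hxK : x ∈ K ^ (k + 1) := by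
      rw [hx, ιMulti_apply]
      exact aux_prod_mem K _ hdK
    have hxne : x ≠ 0 := by
      intro h
      have hL : liftAlternating (R := ℚ)
          (Function.update (fun i => (0 : (Fin (k+2) → ℚ) [⋀^Fin i]→ₗ[ℚ] ℚ)) (k+1) (auxGdet k))
          x = 1 := by
        rw [hx, liftAlternating_apply_ιMulti, Function.update_self, auxGdet_apply k d hd]
      rw [h, map_zero] at hL
      norm_num at hL
    intro hbot
    rw [hbot] at hxK
    exact hxne (Submodule.mem_bot _ |>.1 hxK)
  · -- K ^ (k + 2) = ⊥
    have hKle : K ≤ (LinearMap.ker s).map (ι ℚ) ⊔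
        (LinearMap.range (ι ℚ : (Fin (k+2) → ℚ) →ₗ[ℚ] _) : Submodule ℚ _) ^ 2 * ⊤ := by
      intro x hx
      obtain ⟨r, v, f, hf, rfl⟩ := aux_decompose x
      have h0 := (hK _).1 hx
      rw [map_add, map_add, AlgHom.commutes, map_apply_ι] at h0
      have hμf := aux_map_F s hf
      have h1 := congrArg toTrivSqZeroExt h0
      rw [map_add, map_add, map_zero, AlgHom.commutes, toTrivSqZeroExt_ι,
        aux_trivsq_kills hμf, add_zero] at h1
      have hr := congrArg TrivSqZeroExt.fst h1
      have hsv := congrArg TrivSqZeroExt.snd h1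
      simp [TrivSqZeroExt.algebraMap_eq_inl] at hr hsv
      rw [hr, map_zero, zero_add]
      refine Submodule.add_mem_sup (Submodule.mem_map_of_mem (LinearMap.mem_ker.2 hsv)) ?_
      rw [pow_two, mul_assoc]
      exact hf
    have hker : Module.finrank ℚ (LinearMap.ker s) = k + 1 := by
      have hsurj : LinearMap.range s = ⊤ := by
        rw [Submodule.eq_top_iff']
        intro y
        have h1 : s (y • (Pi.single 0 1 : Fin (k+2) → ℚ)) = y := by rw [map_smul, hs]; simp
        exact ⟨y • (Pi.single 0 1 : Fin (k+2) → ℚ), h1⟩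
      have := LinearMap.finrank_range_add_finrank_ker s
      rw [hsurj, finrank_top] at this
      have h2 : Module.finrank ℚ (Fin (k+2) → ℚ) = k + 2 := Module.finrank_fin_fun ℚ
      have h3 : Module.finrank ℚ ℚ = 1 := Module.finrank_self ℚ
      omega
    have hP : ((LinearMap.ker s).map (ι ℚ)) ^ (k + 2) = ⊥ :=
      aux_map_pow_eq_bot _ _ (by rw [hker]; omega)
    have hA : (LinearMap.range (ι ℚ : (Fin (k+2) → ℚ) →ₗ[ℚ] _) : Submodule ℚ _) ^ (k + 3) = ⊥ := by
      have h4 : (LinearMap.range (ι ℚ : (Fin (k+2) → ℚ) →ₗ[ℚ] _) : Submodule ℚ _) =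
          Submodule.map (ι ℚ) ⊤ := (Submodule.map_top _).symm
      rw [h4]
      refine aux_map_pow_eq_bot _ _ ?_
      rw [finrank_top, Module.finrank_fin_fun]
      omega
    have h5 := (aux_pow_mono hKle (k + 2)).trans
      (aux_pow_le _ (fun y hy => by obtain ⟨v, _, rfl⟩ := hy; exact ⟨v, rfl⟩) (k + 2))
    rw [hP] at h5
    rw [show (k + 2) + 1 = k + 3 from rfl, hA, Submodule.bot_mul, sup_idem] at h5
    exact le_bot_iff.1 h5
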